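/- For a connected graph Γ, the restriction of the edge functionals (coordinate functions on C_1(Γ,ℝ)) to the cycle space F_Γ = Ker ∂, excluding the bridges (which restrict to zero), forms a unimodular system whose complexity equals the number of spanning trees of Γ. -/

import Mathlib

/-- The boundary map `∂ : C₁(Γ,ℝ) → C₀(Γ,ℝ)` of an oriented graph. -/
noncomputable def bdry {V E : Type*} [Fintype E] (tail head : E → V) [DecidableEq V] :
    (E → ℝ) →ₗ[ℝ] (V → ℝ) :=
  LinearMap.pi fun v =>
    ∑ e : E, (((if head e = v then (1 : ℝ) else 0) - (if tail e = v then 1 else 0)) •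
      LinearMap.proj e)

/-- Connectivity using only edges from the set `T`. -/
def GraphConnVia {V E : Type*} (tail head : E → V) (T : Set E) : Prop :=
  ∀ v w : V, Relation.ReflTransGen
    (fun a b => ∃ e ∈ T, (tail e = a ∧ head e = b) ∨ (tail e = b ∧ head e = a)) v w

/-- A bridge is an edge whose removal disconnects the graph. -/
def IsBridge {V E : Type*} (tail head : E → V) (e : E) : Prop :=
  ¬ GraphConnVia tail head {e' | e' ≠ e}

/-- `S` is a maximal linearly independent subset of the family of forms `ξ`. -/
def MaxLinIndep {ι : Type*} {U : Type*} [AddCommGroup U] [Module ℝ U]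
    (ξ : ι → Module.Dual ℝ U) (S : Set ι) : Prop :=
  LinearIndependent ℝ (fun i : S => ξ i) ∧
    ∀ T : Set ι, S ⊆ T → LinearIndependent ℝ (fun i : T => ξ i) → T = S

section Basic
variable {V E : Type*} [Fintype V] [Fintype E] [DecidableEq V] [DecidableEq E]
variable (tail head : E → V)

/-- The step relation along edges in `T`. -/
def erel (T : Set E) : V → V → Prop :=
  fun a b => ∃ e ∈ T, (tail e = a ∧ head e = b) ∨ (tail e = b ∧ head e = a)

lemma erel_symm (T : Set E) : Symmetric (erel tail head T) := by
  rintro a b ⟨e, he, h | h⟩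
  · exact ⟨e, he, Or.inr h⟩
  · exact ⟨e, he, Or.inl h⟩

lemma graphConnVia_iff (T : Set E) :
    GraphConnVia tail head T ↔ ∀ v w : V, Relation.ReflTransGen (erel tail head T) v w :=
  Iff.rfl

lemma bdry_apply (x : E → ℝ) (v : V) :
    bdry tail head x v =
      ∑ e : E, ((if head e = v then (1 : ℝ) else 0) - (if tail e = v then 1 else 0)) * x e := by
  simp [bdry, LinearMap.pi_apply, LinearMap.sum_apply, LinearMap.smul_apply, smul_eq_mul]

lemma bdry_single (e : E) :
    bdry tail head (Pi.single e (1 : ℝ)) = Pi.single (head e) 1 - Pi.single (tail e) 1 := by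
  funext v
  rw [bdry_apply]
  rw [Finset.sum_eq_single e]
  · simp [Pi.single_apply, eq_comm]
  · intro e' _ hne
    simp [Pi.single_apply, hne]
  · simp

/-- A path in `T` gives a flow supported on `T` with boundary `δ_b - δ_a`. -/
lemma exists_flow {T : Set E} {a b : V}
    (h : Relation.ReflTransGen (erel tail head T) a b) :
    ∃ y : E → ℝ, (∀ e ∉ T, y e = 0) ∧
      bdry tail head y = Pi.single b 1 - Pi.single a 1 := by
  induction h with
  | refl => exact ⟨0, fun _ _ => rfl, by simp⟩
  | tail _hab step ih =>
    obtain ⟨y, hy0, hyb⟩ := ih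
    obtain ⟨e, heT, h1 | h1⟩ := step
    · refine ⟨y + Pi.single e 1, ?_, ?_⟩
      · intro f hf
        have : f ≠ e := fun hfe => hf (hfe ▸ heT)
        simp [hy0 f hf, Pi.single_apply, this]
      · rw [map_add, hyb, bdry_single, h1.1, h1.2]
        abel
    · refine ⟨y - Pi.single e 1, ?_, ?_⟩
      · intro f hf
        have : f ≠ e := fun hfe => hf (hfe ▸ heT)
        simp [hy0 f hf, Pi.single_apply, this]
      · rw [map_sub, hyb, bdry_single, h1.1, h1.2]
        abel

/-- The cut identity: summing `∂x = 0` over vertices of `A`. -/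
lemma cut_sum (A : Finset V) (x : E → ℝ) (hx : bdry tail head x = 0) :
    ∑ e : E, ((if head e ∈ A then (1 : ℝ) else 0) - (if tail e ∈ A then 1 else 0)) * x e
      = 0 := by
  have h0 : ∑ v ∈ A, bdry tail head x v = 0 := by
    simp [hx]
  rw [Finset.sum_congr rfl (fun v _ => bdry_apply tail head x v)] at h0
  rw [Finset.sum_comm] at h0
  have key : ∑ e : E, ((if head e ∈ A then (1:ℝ) else 0) - (if tail e ∈ A then 1 else 0)) * x e
      = ∑ e : E, ∑ v ∈ A,
        ((if head e = v then (1:ℝ) else 0) - (if tail e = v then 1 else 0)) * x e := by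
    refine Finset.sum_congr rfl fun e _ => ?_
    rw [← Finset.sum_mul]
    congr 1
    rw [Finset.sum_sub_distrib]
    congr 1
    · exact (Finset.sum_ite_eq A (head e) fun _ => (1:ℝ)).symm
    · exact (Finset.sum_ite_eq A (tail e) fun _ => (1:ℝ)).symm
  rw [key]
  exact h0

/-- Reachable sets are closed under edges of `T`. -/
lemma reach_closed {T : Set E} {a : V} {e : E} (he : e ∈ T) :
    (Relation.ReflTransGen (erel tail head T) a (tail e) ↔
      Relation.ReflTransGen (erel tail head T) a (head e)) := by
  constructor
  · intro h; exact h.tail ⟨e, he, Or.inl ⟨rfl, rfl⟩⟩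
  · intro h; exact h.tail ⟨e, he, Or.inr ⟨rfl, rfl⟩⟩

end Basic
section Bridge
variable {V E : Type*} [Fintype V] [Fintype E] [DecidableEq V] [DecidableEq E]
variable (tail head : E → V)

lemma conn_mono {T T' : Set E} (hTT : T ⊆ T') (h : GraphConnVia tail head T) :
    GraphConnVia tail head T' := by
  intro v w
  exact Relation.ReflTransGen.mono (show ∀ a b, erel tail head T a b → erel tail head T' a b from
    fun a b ⟨f, hf, h'⟩ => ⟨f, hTT hf, h'⟩) v w (h v w)

/-- A bridge coordinate vanishes on the cycle space. -/
lemma bridge_coord_zero (hconn : GraphConnVia tail head Set.univ) {e : E}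
    (hb : IsBridge tail head e) {x : E → ℝ} (hx : bdry tail head x = 0) : x e = 0 := by
  classical
  set T : Set E := {e' | e' ≠ e} with hT
  have hnr : ¬ Relation.ReflTransGen (erel tail head T) (head e) (tail e) := by
    intro hr
    apply hb
    intro v w
    have step : ∀ a b, erel tail head Set.univ a b →
        Relation.ReflTransGen (erel tail head T) a b := by
      rintro a b ⟨f, -, hf⟩
      by_cases hfe : f = e
      · subst hfe
        rcases hf with ⟨ha, hbb⟩ | ⟨ha, hbb⟩
        · subst ha; subst hbb
          haveI : Std.Symm (erel tail head T) := ⟨fun a b h => erel_symm tail head T h⟩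
          exact Std.Symm.symm _ _ hr
        · subst ha; subst hbb; exact hr
      · exact Relation.ReflTransGen.single ⟨f, hfe, hf⟩
    have h' := Relation.ReflTransGen.mono step v w (hconn v w)
    rwa [Relation.reflTransGen_idem] at h'
  set A : Finset V :=
    Finset.univ.filter (fun v => Relation.ReflTransGen (erel tail head T) (head e) v) with hA
  have memA : ∀ v, v ∈ A ↔ Relation.ReflTransGen (erel tail head T) (head e) v := by
    intro v; simp [hA]
  have hcut := cut_sum tail head A x hx
  rw [Finset.sum_eq_single e] at hcut
  · rw [if_pos ((memA (head e)).2 Relation.ReflTransGen.refl),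
      if_neg (fun h => hnr ((memA (tail e)).1 h))] at hcut
    linarith
  · intro f _ hfe
    have hfT : f ∈ T := hfe
    have : tail f ∈ A ↔ head f ∈ A := by
      rw [memA, memA]; exact reach_closed tail head hfT
    by_cases h1 : head f ∈ A
    · rw [if_pos h1, if_pos (this.2 h1)]; ring
    · rw [if_neg h1, if_neg (fun h2 => h1 (this.1 h2))]; ring
  · simp

end Bridge
section Rank
variable {V E : Type*} [Fintype V] [Fintype E] [DecidableEq V] [DecidableEq E]
variable (tail head : E → V)

/-- Functions supported on `T`. -/
def supp (T : Set E) : Submodule ℝ (E → ℝ) where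
  carrier := {x | ∀ e ∉ T, x e = 0}
  add_mem' := fun hx hy e he => by simp [hx e he, hy e he]
  zero_mem' := fun e _ => rfl
  smul_mem' := fun c x hx e he => by simp [hx e he]

lemma mem_supp {T : Set E} {x : E → ℝ} : x ∈ supp T ↔ ∀ e ∉ T, x e = 0 := Iff.rfl

lemma finrank_supp (T : Set E) : Module.finrank ℝ (supp (E := E) T) = T.ncard := by
  classical
  let r : supp (E := E) T →ₗ[ℝ] (T → ℝ) :=
    { toFun := fun x t => x.1 t.1
      map_add' := fun x y => rfl
      map_smul' := fun c x => rfl }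
  have hbij : Function.Bijective r := by
    constructor
    · intro x y hxy
      ext e
      by_cases he : e ∈ T
      · exact congrFun hxy ⟨e, he⟩
      · rw [x.2 e he, y.2 e he]
    · intro y
      refine ⟨⟨fun e => if h : e ∈ T then y ⟨e, h⟩ else 0, fun e he => dif_neg he⟩, ?_⟩
      funext t
      simp [r, t.2]
  rw [(LinearEquiv.ofBijective r hbij).finrank_eq, Module.finrank_pi,
    ← Nat.card_coe_set_eq, Nat.card_eq_fintype_card]

/-- The sum-of-coordinates functional. -/
noncomputable def sumFun : (V → ℝ) →ₗ[ℝ] ℝ := ∑ v : V, LinearMap.proj v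

lemma sumFun_apply (f : V → ℝ) : sumFun f = ∑ v : V, f v := by
  simp [sumFun]

lemma sumFun_bdry (x : E → ℝ) : sumFun (bdry tail head x) = 0 := by
  rw [sumFun_apply]
  rw [Finset.sum_congr rfl (fun v _ => bdry_apply tail head x v), Finset.sum_comm]
  refine Finset.sum_eq_zero fun e _ => ?_
  rw [← Finset.sum_mul]
  have h1 : ∑ v : V, ((if head e = v then (1:ℝ) else 0) - (if tail e = v then 1 else 0)) = 0 := by
    rw [Finset.sum_sub_distrib]
    simp [Finset.sum_ite_eq]
  rw [h1, zero_mul]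

lemma finrank_ker_sumFun [Nonempty V] :
    Module.finrank ℝ (LinearMap.ker (sumFun (V := V))) = Fintype.card V - 1 := by
  have hrn := LinearMap.finrank_range_add_finrank_ker (sumFun (V := V))
  have hsurj : LinearMap.range (sumFun (V := V)) = ⊤ := by
    rw [LinearMap.range_eq_top]
    intro c
    refine ⟨fun _ => c / (Fintype.card V : ℝ), ?_⟩
    rw [sumFun_apply, Finset.sum_const, Finset.card_univ, nsmul_eq_mul]
    field_simp
  rw [hsurj, finrank_top, Module.finrank_pi, Module.finrank_self] at hrn
  omega

lemma finrank_range_bdry_le [Nonempty V] :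
    Module.finrank ℝ (LinearMap.range (bdry tail head)) ≤ Fintype.card V - 1 := by
  rw [← finrank_ker_sumFun (V := V)]
  refine Submodule.finrank_mono ?_
  rintro - ⟨x, rfl⟩
  exact LinearMap.mem_ker.2 (sumFun_bdry tail head x)

/-- A submodule containing all the differences `δ_v - δ_{v₀}` has rank at least `|V| - 1`. -/
lemma card_sub_one_le_finrank (R : Submodule ℝ (V → ℝ)) (v₀ : V)
    (hmem : ∀ v, (Pi.single v 1 - Pi.single v₀ 1 : V → ℝ) ∈ R) :
    Fintype.card V - 1 ≤ Module.finrank ℝ R := by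
  classical
  set fam : {v : V // ¬ v = v₀} → R :=
    fun v => ⟨Pi.single v.1 1 - Pi.single v₀ 1, hmem v.1⟩ with hfam
  have li : LinearIndependent ℝ fam := by
    apply LinearIndependent.of_comp R.subtype
    rw [Fintype.linearIndependent_iff]
    intro g hg w
    have := congrFun hg w.1
    simp only [hfam, Function.comp, Submodule.coe_subtype, Finset.sum_apply, Pi.smul_apply,
      Pi.sub_apply, Pi.single_apply, smul_eq_mul, Pi.zero_apply] at this
    rw [Finset.sum_congr rfl (fun v _ => by rw [if_neg w.2, sub_zero])] at this
    rwa [Finset.sum_eq_single w, if_pos rfl, mul_one] at this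
    · intro v _ hv
      rw [if_neg (fun h => hv (Subtype.ext h.symm)), mul_zero]
    · simp
  have hcard := li.fintype_card_le_finrank
  rwa [Fintype.card_subtype_compl, Fintype.card_subtype_eq] at hcard

end Rank
section Rank2
variable {V E : Type*} [Fintype V] [Fintype E] [DecidableEq V] [DecidableEq E]
variable (tail head : E → V)

lemma nonbridge_cycle {e : E} (hb : ¬ IsBridge tail head e) :
    ∃ x : E → ℝ, bdry tail head x = 0 ∧ x e = 1 := by
  have hc : GraphConnVia tail head {e' | e' ≠ e} := not_not.mp hb
  obtain ⟨y, hy0, hyb⟩ := exists_flow tail head (hc (head e) (tail e))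
  refine ⟨Pi.single e 1 + y, ?_, ?_⟩
  · rw [map_add, bdry_single, hyb]; abel
  · have hye : y e = 0 := hy0 e (by simp)
    simp [hye, Pi.single_apply]

lemma single_sub_mem_range {T : Set E} (hc : GraphConnVia tail head T) (v₀ v : V) :
    (Pi.single v 1 - Pi.single v₀ 1 : V → ℝ) ∈
      LinearMap.range ((bdry tail head).comp (supp T).subtype) := by
  obtain ⟨y, hy0, hyb⟩ := exists_flow tail head (hc v₀ v)
  exact ⟨⟨y, hy0⟩, hyb⟩

lemma finrank_range_bdrySupp_ge [Nonempty V] {T : Set E} (hc : GraphConnVia tail head T) :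
    Fintype.card V - 1 ≤
      Module.finrank ℝ (LinearMap.range ((bdry tail head).comp (supp T).subtype)) :=
  card_sub_one_le_finrank _ (Classical.arbitrary V)
    (fun v => single_sub_mem_range tail head hc _ v)

/-- A connected graph with `|V| - 1` edges has no cycles. -/
lemma tree_acyclic [Nonempty V] {T : Set E} (hc : GraphConnVia tail head T)
    (hcard : T.ncard = Fintype.card V - 1) {x : E → ℝ}
    (hx : bdry tail head x = 0) (hsupp : ∀ e ∉ T, x e = 0) : x = 0 := by
  set L := (bdry tail head).comp (supp T).subtype with hL
  have hrn := LinearMap.finrank_range_add_finrank_ker L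
  rw [finrank_supp, hcard] at hrn
  have hge := finrank_range_bdrySupp_ge tail head hc
  rw [← hL] at hge
  have hker : Module.finrank ℝ (LinearMap.ker L) = 0 := by omega
  have hbot : LinearMap.ker L = ⊥ := Submodule.finrank_eq_zero.mp hker
  have hx' : (⟨x, hsupp⟩ : supp T) ∈ LinearMap.ker L := by
    rw [LinearMap.mem_ker]
    exact hx
  rw [hbot, Submodule.mem_bot] at hx'
  exact congrArg Subtype.val hx'

lemma finrank_range_bdry [Nonempty V] (hconn : GraphConnVia tail head Set.univ) :
    Module.finrank ℝ (LinearMap.range (bdry tail head)) = Fintype.card V - 1 := by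
  refine le_antisymm (finrank_range_bdry_le tail head) ?_
  refine card_sub_one_le_finrank _ (Classical.arbitrary V) (fun v => ?_)
  obtain ⟨y, _, hyb⟩ := exists_flow tail head (hconn (Classical.arbitrary V) v)
  exact ⟨y, hyb⟩

lemma finrank_ker_bdry [Nonempty V] (hconn : GraphConnVia tail head Set.univ) :
    Module.finrank ℝ (LinearMap.ker (bdry tail head)) =
      Fintype.card E - (Fintype.card V - 1) ∧ Fintype.card V - 1 ≤ Fintype.card E := by
  have hrn := LinearMap.finrank_range_add_finrank_ker (bdry tail head)
  rw [finrank_range_bdry tail head hconn, Module.finrank_pi] at hrn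
  omega

end Rank2
section DualGeneric
variable {U : Type*} [AddCommGroup U] [Module ℝ U] [FiniteDimensional ℝ U]

lemma span_dual_eq_top (Φ : Set (Module.Dual ℝ U))
    (h : ∀ x : U, (∀ φ ∈ Φ, φ x = 0) → x = 0) :
    Submodule.span ℝ Φ = ⊤ := by
  have hW := Subspace.finrank_add_finrank_dualCoannihilator_eq (Submodule.span ℝ Φ)
  have hbot : (Submodule.span ℝ Φ).dualCoannihilator = ⊥ := by
    rw [eq_bot_iff]
    intro x hx
    have hx' := (Submodule.mem_dualCoannihilator x).1 hx
    have hx0 : x = 0 := h x fun φ hφ => hx' φ (Submodule.subset_span hφ)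
    simp [hx0]
  rw [hbot, finrank_bot, add_zero] at hW
  exact Submodule.eq_top_of_finrank_eq (by rw [hW, Subspace.dual_finrank_eq])

lemma max_of_span_top {ι : Type*} (ξ : ι → Module.Dual ℝ U) (S : Set ι)
    (hind : LinearIndependent ℝ fun i : S => ξ i)
    (hspan : Submodule.span ℝ (ξ '' S) = ⊤) : MaxLinIndep ξ S := by
  refine ⟨hind, fun T hST hT => ?_⟩
  by_contra hne
  obtain ⟨t, htT, htS⟩ : ∃ t, t ∈ T ∧ t ∉ S := by
    by_contra h
    push_neg at h
    exact hne (le_antisymm h hST)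
  have hmem : ξ t ∈ Submodule.span ℝ (ξ '' S) := by rw [hspan]; trivial
  have himg : (fun i : T => ξ i) '' {i : T | i.1 ∈ S} = ξ '' S := by
    ext φ
    constructor
    · rintro ⟨⟨i, hiT⟩, hiS, rfl⟩
      exact ⟨i, hiS, rfl⟩
    · rintro ⟨i, hiS, rfl⟩
      exact ⟨⟨i, hST hiS⟩, hiS, rfl⟩
  exact hT.notMem_span_image (s := {i : T | i.1 ∈ S}) (x := ⟨t, htT⟩) htS (himg ▸ hmem)

lemma span_top_of_max {ι : Type*} (ξ : ι → Module.Dual ℝ U)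
    (hall : Submodule.span ℝ (Set.range ξ) = ⊤) {S : Set ι} (hmax : MaxLinIndep ξ S) :
    Submodule.span ℝ (ξ '' S) = ⊤ := by
  by_contra hne
  have hex : ∃ i, ξ i ∉ Submodule.span ℝ (ξ '' S) := by
    by_contra hforall
    push_neg at hforall
    apply hne
    refine le_antisymm le_top ?_
    rw [← hall]
    refine Submodule.span_le.2 ?_
    rintro - ⟨i, rfl⟩
    exact hforall i
  obtain ⟨i, hi⟩ := hex
  have hiS : i ∉ S := fun h => hi (Submodule.subset_span ⟨i, h, rfl⟩)
  have hInj : Set.InjOn ξ S := by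
    intro a ha b hb hab
    have := hmax.1.injective (a₁ := ⟨a, ha⟩) (a₂ := ⟨b, hb⟩) hab
    exact congrArg Subtype.val this
  have hInj' : Set.InjOn ξ (insert i S) := by
    intro a ha b hb hab
    rcases ha with rfl | ha
    · rcases hb with rfl | hb
      · rfl
      · exact absurd (hab ▸ Submodule.subset_span ⟨b, hb, rfl⟩) hi
    · rcases hb with rfl | hb
      · exact absurd (hab ▸ Submodule.subset_span ⟨a, ha, rfl⟩) hi
      · exact hInj ha hb hab
  have himgind : LinearIndependent ℝ fun x : (ξ '' S) => (x : Module.Dual ℝ U) :=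
    (linearIndepOn_iff_image hInj).1 hmax.1
  have hins : LinearIndependent ℝ fun x : (insert (ξ i) (ξ '' S) : Set (Module.Dual ℝ U)) =>
      (x : Module.Dual ℝ U) := LinearIndepOn.id_insert himgind hi
  have : LinearIndependent ℝ fun x : (insert i S : Set ι) => ξ x := by
    show LinearIndepOn ℝ ξ (insert i S)
    rw [linearIndepOn_iff_image hInj', Set.image_insert_eq]
    exact hins
  have := hmax.2 (insert i S) (Set.subset_insert i S) this
  exact hiS (this ▸ Set.mem_insert i S)

lemma ncard_of_max {ι : Type*} [Finite ι] (ξ : ι → Module.Dual ℝ U)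
    (hall : Submodule.span ℝ (Set.range ξ) = ⊤) {S : Set ι} (hmax : MaxLinIndep ξ S) :
    S.ncard = Module.finrank ℝ U := by
  classical
  haveI : Fintype S := Fintype.ofFinite _
  have himg : Set.range (fun i : S => ξ i) = ξ '' S := by
    ext φ
    simp [Set.mem_image, Subtype.exists]
  have hsp : ⊤ ≤ Submodule.span ℝ (Set.range fun i : S => ξ i) := by
    rw [himg, span_top_of_max ξ hall hmax]
  have b : Module.Basis S ℝ (Module.Dual ℝ U) := Module.Basis.mk hmax.1 hsp
  rw [← Nat.card_coe_set_eq, Nat.card_eq_fintype_card,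
    ← Module.finrank_eq_card_basis b, Subspace.dual_finrank_eq]

end DualGeneric
section Graphic
variable {V E : Type*} [Fintype V] [Fintype E] [DecidableEq V] [DecidableEq E]
variable (tail head : E → V)

/-- The edge functionals on the cycle space, indexed by non-bridges. -/
noncomputable def xi : {e : E // ¬ IsBridge tail head e} →
    Module.Dual ℝ (LinearMap.ker (bdry tail head)) :=
  fun e => (LinearMap.proj e.1).comp (LinearMap.ker (bdry tail head)).subtype

lemma xi_apply (i : {e : E // ¬ IsBridge tail head e}) (x : LinearMap.ker (bdry tail head)) :
    xi tail head i x = x.1 i.1 := rfl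

lemma sum_reindex {S : Set {e : E // ¬ IsBridge tail head e}} [Fintype S] (F : E → ℝ)
    (h0 : ∀ e : E, e ∉ Subtype.val '' S → F e = 0) :
    ∑ e : E, F e = ∑ i : S, F i.1.1 := by
  classical
  have himg : ∀ e : E, e ∈ Finset.image (fun i : S => i.1.1) Finset.univ ↔
      e ∈ Subtype.val '' S := by
    intro e
    simp only [Finset.mem_image, Finset.mem_univ, true_and, Set.mem_image]
    constructor
    · rintro ⟨i, rfl⟩; exact ⟨i.1, i.2, rfl⟩
    · rintro ⟨a, ha, rfl⟩; exact ⟨⟨a, ha⟩, rfl⟩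
  have h1 : ∑ e ∈ Finset.image (fun i : S => i.1.1) Finset.univ, F e = ∑ e : E, F e := by
    refine Finset.sum_subset (Finset.subset_univ _) ?_
    intro e _ he
    exact h0 e (fun hmem => he ((himg e).2 hmem))
  have h2 : ∑ e ∈ Finset.image (fun i : S => i.1.1) Finset.univ, F e = ∑ i : S, F i.1.1 :=
    Finset.sum_image (fun a _ b _ h => Subtype.ext (Subtype.ext h))
  rw [← h1, h2]

/-- If the complement of `S` is connected, the functionals of `S` are independent. -/
lemma indep_S {S : Set {e : E // ¬ IsBridge tail head e}}
    (hc : GraphConnVia tail head ((Subtype.val '' S)ᶜ)) :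
    LinearIndependent ℝ (fun i : S => xi tail head i) := by
  classical
  haveI : Fintype S := Fintype.ofFinite _
  rw [Fintype.linearIndependent_iff]
  intro g hg f
  obtain ⟨y, hy0, hyb⟩ := exists_flow tail head (hc (head f.1.1) (tail f.1.1))
  set x : E → ℝ := Pi.single f.1.1 1 + y with hxdef
  have hxker : bdry tail head x = 0 := by rw [hxdef, map_add, bdry_single, hyb]; abel
  have happ := congrArg (fun φ : Module.Dual ℝ (LinearMap.ker (bdry tail head)) =>
      φ ⟨x, LinearMap.mem_ker.2 hxker⟩) hg
  simp only [LinearMap.sum_apply, LinearMap.smul_apply, LinearMap.zero_apply,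
    smul_eq_mul, xi_apply] at happ
  have hxval : ∀ i : S, x i.1.1 = if i = f then 1 else 0 := by
    intro i
    have hyi : y i.1.1 = 0 := hy0 _ (fun hcontra => hcontra ⟨i.1, i.2, rfl⟩)
    by_cases hif : i = f
    · subst hif; simp [hxdef, hyi, Pi.single_apply]
    · have hne : i.1.1 ≠ f.1.1 := fun h => hif (Subtype.ext (Subtype.ext h))
      simp [hxdef, hyi, Pi.single_apply, hne, hif]
  rw [Finset.sum_congr rfl (fun i _ => by rw [hxval i])] at happ
  rw [Finset.sum_eq_single f] at happ
  · rwa [if_pos rfl, mul_one] at happ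
  · intro i _ hif
    rw [if_neg hif, mul_zero]
  · simp

/-- If the complement of `S` is a spanning tree, the functionals of `S` span the dual. -/
lemma span_S_top [Nonempty V] {S : Set {e : E // ¬ IsBridge tail head e}}
    (hc : GraphConnVia tail head ((Subtype.val '' S)ᶜ))
    (hcard : ((Subtype.val '' S)ᶜ).ncard = Fintype.card V - 1) :
    Submodule.span ℝ (xi tail head '' S) = ⊤ := by
  apply span_dual_eq_top
  intro x hx
  have hsupp : ∀ e ∉ (Subtype.val '' S)ᶜ, x.1 e = 0 := by
    intro e he
    obtain ⟨i, hiS, rfl⟩ := not_not.mp he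
    exact hx (xi tail head i) ⟨i, hiS, rfl⟩
  have hz := tree_acyclic tail head hc hcard (LinearMap.mem_ker.1 x.2) hsupp
  exact Subtype.ext hz

/-- The complement of an independent set is connected. -/
lemma conn_compl_of_indep (hconn : GraphConnVia tail head Set.univ)
    {S : Set {e : E // ¬ IsBridge tail head e}}
    (hind : LinearIndependent ℝ (fun i : S => xi tail head i)) :
    GraphConnVia tail head ((Subtype.val '' S)ᶜ) := by
  classical
  haveI : Fintype S := Fintype.ofFinite _
  intro v w
  set T₀ : Set E := (Subtype.val '' S)ᶜ with hT₀
  set A : Finset V :=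
    Finset.univ.filter (fun u => Relation.ReflTransGen (erel tail head T₀) v u) with hA
  have memA : ∀ u, u ∈ A ↔ Relation.ReflTransGen (erel tail head T₀) v u := by
    intro u; simp [hA]
  set c : E → ℝ := fun e =>
    (if head e ∈ A then (1:ℝ) else 0) - (if tail e ∈ A then 1 else 0) with hcdef
  have hT₀c : ∀ e ∈ T₀, c e = 0 := by
    intro e he
    have hcl : tail e ∈ A ↔ head e ∈ A := by
      rw [memA, memA]
      exact reach_closed tail head he
    simp only [hcdef]
    by_cases h1 : head e ∈ A
    · rw [if_pos h1, if_pos (hcl.2 h1), sub_self]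
    · rw [if_neg h1, if_neg (fun h2 => h1 (hcl.1 h2)), sub_self]
  have hrel : ∑ i : S, c i.1.1 • xi tail head i = 0 := by
    apply LinearMap.ext
    intro x
    simp only [LinearMap.sum_apply, LinearMap.smul_apply, smul_eq_mul,
      LinearMap.zero_apply, xi_apply]
    rw [← sum_reindex tail head (fun e => c e * x.1 e)
      (fun e he => by show c e * x.1 e = 0; rw [hT₀c e he, zero_mul])]
    exact cut_sum tail head A x.1 (LinearMap.mem_ker.1 x.2)
  have hc0 : ∀ i : S, c i.1.1 = 0 := Fintype.linearIndependent_iff.1 hind _ hrel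
  have hstep : ∀ a b, erel tail head Set.univ a b →
      Relation.ReflTransGen (erel tail head T₀) v a →
      Relation.ReflTransGen (erel tail head T₀) v b := by
    rintro a b ⟨e, -, hee⟩ hva
    by_cases heT : e ∈ T₀
    · exact hva.tail ⟨e, heT, hee⟩
    · have heS : e ∈ Subtype.val '' S := not_not.mp heT
      obtain ⟨i0, hi0S, hi0e⟩ := heS
      have hce : c e = 0 := by
        have := hc0 ⟨i0, hi0S⟩
        rwa [hi0e] at this
      simp only [hcdef] at hce
      have hiff : (head e ∈ A) ↔ (tail e ∈ A) := by
        by_cases h1 : head e ∈ A <;> by_cases h2 : tail e ∈ A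
        · exact iff_of_true h1 h2
        · exfalso; rw [if_pos h1, if_neg h2] at hce; norm_num at hce
        · exfalso; rw [if_neg h1, if_pos h2] at hce; norm_num at hce
        · exact iff_of_false h1 h2
      rcases hee with ⟨hta, hhb⟩ | ⟨htb, hha⟩
      · have haA : tail e ∈ A := (memA _).2 (hta ▸ hva)
        have := hiff.2 haA
        exact (memA _).1 (hhb ▸ this)
      · have haA : head e ∈ A := (memA _).2 (hha ▸ hva)
        have := hiff.1 haA
        exact (memA _).1 (htb ▸ this)
  have hpath := hconn v w
  induction hpath with
  | refl => exact Relation.ReflTransGen.refl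
  | tail h step ih => exact hstep _ _ step ih

/-- Every bridge belongs to every connected spanning subgraph. -/
lemma bridge_mem_tree {T : Set E} (hc : GraphConnVia tail head T) {e : E}
    (hb : IsBridge tail head e) : e ∈ T := by
  by_contra he
  exact hb (conn_mono tail head (fun f hf (hfe : f = e) => he (hfe ▸ hf)) hc)

end Graphic
section Cut
variable {V E : Type*} [Fintype V] [Fintype E] [DecidableEq V] [DecidableEq E]
variable (tail head : E → V)

/-- Fundamental cut relation: a tree-edge functional is an integral combination of the
complement functionals. -/
lemma cut_relation [Nonempty V] {S : Set {e : E // ¬ IsBridge tail head e}}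
    (hc : GraphConnVia tail head ((Subtype.val '' S)ᶜ))
    (hcard : ((Subtype.val '' S)ᶜ).ncard = Fintype.card V - 1)
    (f : {e : E // ¬ IsBridge tail head e}) (hf : f.1 ∈ (Subtype.val '' S)ᶜ) :
    xi tail head f ∈ Submodule.span ℤ (xi tail head '' S) := by
  classical
  haveI : Fintype S := Fintype.ofFinite _
  set T₁ : Set E := (Subtype.val '' S)ᶜ \ {f.1} with hT₁
  set A : Finset V := Finset.univ.filter
    (fun u => Relation.ReflTransGen (erel tail head T₁) (head f.1) u) with hA
  have memA : ∀ u, u ∈ A ↔ Relation.ReflTransGen (erel tail head T₁) (head f.1) u := by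
    intro u; simp [hA]
  have htail : tail f.1 ∉ A := by
    intro hmem
    obtain ⟨y, hy0, hyb⟩ := exists_flow tail head ((memA _).1 hmem)
    set x : E → ℝ := Pi.single f.1 1 + y with hxdef
    have hxker : bdry tail head x = 0 := by rw [hxdef, map_add, bdry_single, hyb]; abel
    have hsupp : ∀ e ∉ (Subtype.val '' S)ᶜ, x e = 0 := by
      intro e he
      have hef : e ≠ f.1 := fun h => he (h ▸ hf)
      have heT : e ∉ T₁ := fun h => he h.1
      simp [hxdef, hy0 e heT, Pi.single_apply, hef]
    have hz := tree_acyclic tail head hc hcard hxker hsupp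
    have hone : x f.1 = 1 := by
      have hyf : y f.1 = 0 := hy0 _ (fun h => h.2 rfl)
      simp [hxdef, hyf, Pi.single_apply]
    rw [hz] at hone
    norm_num at hone
  have hhead : head f.1 ∈ A := (memA _).2 Relation.ReflTransGen.refl
  set c : E → ℝ := fun e =>
    (if head e ∈ A then (1:ℝ) else 0) - (if tail e ∈ A then 1 else 0) with hcdef
  have hT₁c : ∀ e ∈ T₁, c e = 0 := by
    intro e he
    have hcl : tail e ∈ A ↔ head e ∈ A := by
      rw [memA, memA]; exact reach_closed tail head he
    simp only [hcdef]
    by_cases h1 : head e ∈ A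
    · rw [if_pos h1, if_pos (hcl.2 h1), sub_self]
    · rw [if_neg h1, if_neg (fun h2 => h1 (hcl.1 h2)), sub_self]
  have hcf : c f.1 = 1 := by
    simp only [hcdef]
    rw [if_pos hhead, if_neg htail, sub_zero]
  set ε : S → ℤ := fun i =>
    (if tail i.1.1 ∈ A then (1:ℤ) else 0) - (if head i.1.1 ∈ A then 1 else 0) with hε
  have hcast : ∀ i : S, ((ε i : ℤ) : ℝ) = - c i.1.1 := by
    intro i
    by_cases h1 : tail i.1.1 ∈ A <;> by_cases h2 : head i.1.1 ∈ A <;>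
      simp [hε, hcdef, h1, h2]
  have hkey : xi tail head f = ∑ i : S, ε i • xi tail head i := by
    apply LinearMap.ext
    intro x
    have hcut := cut_sum tail head A x.1 (LinearMap.mem_ker.1 x.2)
    set G : E → ℝ := fun e => if e = f.1 then 0 else c e * x.1 e with hG
    have hsplit : ∑ e : E, c e * x.1 e
        = (∑ e : E, if e = f.1 then c e * x.1 e else 0) + ∑ e : E, G e := by
      rw [← Finset.sum_add_distrib]
      refine Finset.sum_congr rfl fun e _ => ?_
      simp only [hG]
      by_cases h : e = f.1 <;> simp [h]
    have h1 : (∑ e : E, if e = f.1 then c e * x.1 e else 0) = x.1 f.1 := by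
      rw [Finset.sum_ite_eq' Finset.univ f.1 (fun e => c e * x.1 e),
        if_pos (Finset.mem_univ _), hcf, one_mul]
    have hGzero : ∀ e : E, e ∉ Subtype.val '' S → G e = 0 := by
      intro e he
      simp only [hG]
      by_cases hef : e = f.1
      · rw [if_pos hef]
      · rw [if_neg hef, hT₁c e ⟨he, hef⟩, zero_mul]
    have h2 : ∑ e : E, G e = ∑ i : S, c i.1.1 * x.1 i.1.1 := by
      rw [sum_reindex tail head G hGzero]
      refine Finset.sum_congr rfl fun i _ => ?_
      have hif : i.1.1 ≠ f.1 := fun h => hf (h ▸ ⟨i.1, i.2, rfl⟩)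
      simp [hG, hif]
    rw [hsplit, h1, h2] at hcut
    simp only [LinearMap.sum_apply, LinearMap.smul_apply, xi_apply, zsmul_eq_mul]
    rw [Finset.sum_congr rfl (fun i _ => by rw [hcast i])]
    have : ∑ i : S, -c i.1.1 * x.1 i.1.1 = -∑ i : S, c i.1.1 * x.1 i.1.1 := by
      rw [← Finset.sum_neg_distrib]
      exact Finset.sum_congr rfl fun i _ => by ring
    rw [this]
    linarith
  rw [hkey]
  exact Submodule.sum_mem _ (fun i _ =>
    Submodule.smul_mem _ (ε i) (Submodule.subset_span ⟨i.1, i.2, rfl⟩))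

end Cut
section Main
variable {V E : Type*} [Fintype V] [Fintype E] [DecidableEq V] [DecidableEq E]
variable (tail head : E → V)

lemma span_all (hconn : GraphConnVia tail head Set.univ) :
    Submodule.span ℝ (Set.range (xi tail head)) = ⊤ := by
  apply span_dual_eq_top
  intro x hx
  refine Subtype.ext (funext fun e => ?_)
  show x.1 e = 0
  by_cases hb : IsBridge tail head e
  · exact bridge_coord_zero tail head hconn hb (LinearMap.mem_ker.1 x.2)
  · exact hx (xi tail head ⟨e, hb⟩) ⟨⟨e, hb⟩, rfl⟩

lemma dir1 [Nonempty V] (hconn : GraphConnVia tail head Set.univ)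
    {S : Set {e : E // ¬ IsBridge tail head e}} (hmax : MaxLinIndep (xi tail head) S) :
    ((Subtype.val '' S)ᶜ).ncard = Fintype.card V - 1 ∧
      GraphConnVia tail head ((Subtype.val '' S)ᶜ) := by
  have hc := conn_compl_of_indep tail head hconn hmax.1
  refine ⟨?_, hc⟩
  have hS := ncard_of_max (xi tail head) (span_all tail head hconn) hmax
  have hk := finrank_ker_bdry tail head hconn
  have himg : (Subtype.val '' S).ncard = S.ncard :=
    Set.ncard_image_of_injective _ Subtype.val_injective
  have hcompl := Set.ncard_add_ncard_compl (Subtype.val '' S)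
  rw [Nat.card_eq_fintype_card] at hcompl
  omega

lemma dir2 [Nonempty V] {T : Set E}
    (hcard : T.ncard = Fintype.card V - 1) (hc : GraphConnVia tail head T) :
    MaxLinIndep (xi tail head) {i : {e : E // ¬ IsBridge tail head e} | i.1 ∉ T} ∧
      (Subtype.val '' {i : {e : E // ¬ IsBridge tail head e} | i.1 ∉ T})ᶜ = T := by
  have hcompl : (Subtype.val '' {i : {e : E // ¬ IsBridge tail head e} | i.1 ∉ T})ᶜ = T := by
    have himg : Subtype.val '' {i : {e : E // ¬ IsBridge tail head e} | i.1 ∉ T} = Tᶜ := by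
      ext e
      constructor
      · rintro ⟨i, hi, rfl⟩; exact hi
      · intro he
        have hnb : ¬ IsBridge tail head e := fun hb => he (bridge_mem_tree tail head hc hb)
        exact ⟨⟨e, hnb⟩, he, rfl⟩
    rw [himg, compl_compl]
  have hc' : GraphConnVia tail head
      ((Subtype.val '' {i : {e : E // ¬ IsBridge tail head e} | i.1 ∉ T})ᶜ) := by
    rw [hcompl]; exact hc
  have hcard' : ((Subtype.val '' {i : {e : E // ¬ IsBridge tail head e} | i.1 ∉ T})ᶜ).ncard =
      Fintype.card V - 1 := by
    rw [hcompl]; exact hcard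
  exact ⟨max_of_span_top _ _ (indep_S tail head hc') (span_S_top tail head hc' hcard'), hcompl⟩

end Main

/-- The graphic unimodular system: the edge functionals restricted to the cycle space
`F_Γ = Ker ∂`, excluding the bridges, form a unimodular system whose complexity is the
number of spanning trees of `Γ`. -/
theorem stmt7 {V E : Type*} [Fintype V] [Fintype E] [DecidableEq V] [DecidableEq E]
    (tail head : E → V) (hconn : GraphConnVia tail head Set.univ) :
    (∀ e : {e : E // ¬ IsBridge tail head e},
      ((LinearMap.proj e.1).comp (LinearMap.ker (bdry tail head)).subtype :
        Module.Dual ℝ (LinearMap.ker (bdry tail head))) ≠ 0) ∧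
    Submodule.span ℝ (Set.range fun e : {e : E // ¬ IsBridge tail head e} =>
      ((LinearMap.proj e.1).comp (LinearMap.ker (bdry tail head)).subtype :
        Module.Dual ℝ (LinearMap.ker (bdry tail head)))) = ⊤ ∧
    (∃ M : Submodule ℤ (Module.Dual ℝ (LinearMap.ker (bdry tail head))),
      ∀ S, MaxLinIndep (fun e : {e : E // ¬ IsBridge tail head e} =>
        ((LinearMap.proj e.1).comp (LinearMap.ker (bdry tail head)).subtype)) S →
        Submodule.span ℤ ((fun e : {e : E // ¬ IsBridge tail head e} =>
          ((LinearMap.proj e.1).comp (LinearMap.ker (bdry tail head)).subtype :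
            Module.Dual ℝ (LinearMap.ker (bdry tail head)))) '' S) = M) ∧
    Set.ncard {S | MaxLinIndep (fun e : {e : E // ¬ IsBridge tail head e} =>
        ((LinearMap.proj e.1).comp (LinearMap.ker (bdry tail head)).subtype :
          Module.Dual ℝ (LinearMap.ker (bdry tail head)))) S} =
      Set.ncard {T : Set E | T.ncard = Nat.card V - 1 ∧ GraphConnVia tail head T} := by
  have hxieq : (fun e : {e : E // ¬ IsBridge tail head e} =>
      ((LinearMap.proj e.1).comp (LinearMap.ker (bdry tail head)).subtype :
        Module.Dual ℝ (LinearMap.ker (bdry tail head)))) = xi tail head := rfl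
  rcases isEmpty_or_nonempty V with hV | hV
  · haveI : IsEmpty E := ⟨fun e => IsEmpty.false (tail e)⟩
    refine ⟨fun e => isEmptyElim e.1, ?_, ⟨⊥, fun S _ => ?_⟩, ?_⟩
    · rw [eq_top_iff]
      rintro φ -
      have hφ : φ = 0 := by
        apply LinearMap.ext
        intro x
        have hx : x = 0 := Subtype.ext (funext fun e => isEmptyElim e)
        rw [hx, map_zero, map_zero]
      rw [hφ]
      exact Submodule.zero_mem _
    · have hS : S = ∅ := Set.eq_empty_of_isEmpty S
      rw [hS, Set.image_empty, Submodule.span_empty]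
    · have h1 : {S | MaxLinIndep (fun e : {e : E // ¬ IsBridge tail head e} =>
          ((LinearMap.proj e.1).comp (LinearMap.ker (bdry tail head)).subtype :
            Module.Dual ℝ (LinearMap.ker (bdry tail head)))) S} = {∅} := by
        ext S
        simp only [Set.mem_setOf_eq, Set.mem_singleton_iff]
        constructor
        · intro _; exact Set.eq_empty_of_isEmpty S
        · rintro rfl
          haveI : IsEmpty ((∅ : Set {e : E // ¬ IsBridge tail head e}) : Set _).Elem :=
            Set.isEmpty_coe_sort.2 rfl
          exact ⟨linearIndependent_empty_type, fun T _ _ => Set.eq_empty_of_isEmpty T⟩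
      have h2 : {T : Set E | T.ncard = Nat.card V - 1 ∧ GraphConnVia tail head T} = {∅} := by
        ext T
        simp only [Set.mem_setOf_eq, Set.mem_singleton_iff]
        constructor
        · intro _; exact Set.eq_empty_of_isEmpty T
        · rintro rfl
          refine ⟨by simp [Nat.card_of_isEmpty], fun v w => isEmptyElim v⟩
      rw [h1, h2, Set.ncard_singleton, Set.ncard_singleton]
  · rw [hxieq]
    refine ⟨?_, span_all tail head hconn, ?_, ?_⟩
    · intro e h0
      obtain ⟨x, hxk, hxe⟩ := nonbridge_cycle tail head e.2
      have h1 : x e.1 = 0 := congrArg (fun φ : Module.Dual ℝ (LinearMap.ker (bdry tail head)) =>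
        φ ⟨x, LinearMap.mem_ker.2 hxk⟩) h0
      rw [hxe] at h1
      norm_num at h1
    · refine ⟨Submodule.span ℤ (Set.range (xi tail head)), fun S hS => ?_⟩
      refine le_antisymm (Submodule.span_mono (Set.image_subset_range _ _)) ?_
      rw [Submodule.span_le]
      rintro - ⟨i, rfl⟩
      by_cases hi : i.1 ∈ Subtype.val '' S
      · obtain ⟨j, hj, hje⟩ := hi
        have : j = i := Subtype.ext hje
        subst this
        exact Submodule.subset_span ⟨j, hj, rfl⟩
      · obtain ⟨hcard, hc⟩ := dir1 tail head hconn hS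
        exact cut_relation tail head hc hcard i hi
    · have himage : (fun S : Set {e : E // ¬ IsBridge tail head e} => (Subtype.val '' S)ᶜ) ''
          {S | MaxLinIndep (xi tail head) S} =
          {T : Set E | T.ncard = Nat.card V - 1 ∧ GraphConnVia tail head T} := by
        ext T
        constructor
        · rintro ⟨S, hS, rfl⟩
          obtain ⟨hcard, hc⟩ := dir1 tail head hconn hS
          exact ⟨by rw [Nat.card_eq_fintype_card]; exact hcard, hc⟩
        · rintro ⟨hcard, hc⟩
          rw [Nat.card_eq_fintype_card] at hcard
          obtain ⟨hmax, hcompl⟩ := dir2 tail head hcard hc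
          exact ⟨_, hmax, hcompl⟩
      rw [← himage, Set.ncard_image_of_injOn]
      intro S₁ _ S₂ _ h
      have := congrArg compl h
      rw [compl_compl, compl_compl] at this
      exact Set.image_injective.2 Subtype.val_injective this
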